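/- Let f : Finset V → ℝ be monotone and submodular with f(∅) = 0, and let S, S* ⊆ V with |S*| ≤ s. Then f(S*) ≤ f(S) + ∑_{x ∈ S* \ S} (f(S ∪ {x}) − f(S)) ≤ f(S) + s · max_{x ∉ S} (f(S ∪ {x}) − f(S)). -/

import Mathlib

theorem stmt_15 {V : Type*} [Fintype V] [DecidableEq V]
    (f : Finset V → ℝ)
    (hmono : ∀ S T : Finset V, S ⊆ T → f S ≤ f T)
    (hsub : ∀ S T : Finset V, S ⊆ T → ∀ x : V, x ∉ T →
      f (insert x S) - f S ≥ f (insert x T) - f T)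
    (hf0 : f ∅ = 0)
    (s : ℕ) (S Sstar : Finset V) (hcard : Sstar.card ≤ s)
    (hne : Sᶜ.Nonempty) :
    f Sstar ≤ f S + ∑ x ∈ Sstar \ S, (f (insert x S) - f S) ∧
    f S + ∑ x ∈ Sstar \ S, (f (insert x S) - f S) ≤
      f S + (s : ℝ) * Sᶜ.sup' hne (fun x => f (insert x S) - f S) := by
  have key : ∀ T : Finset V, f (S ∪ T) ≤ f S + ∑ x ∈ T \ S, (f (insert x S) - f S) := by
    intro T
    induction T using Finset.induction with
    | empty => simp
    | insert a T ha ih =>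
      by_cases haS : a ∈ S
      · have h1 : S ∪ insert a T = S ∪ T := by
          ext x; by_cases hxa : x = a <;> simp [hxa, haS, ha] <;> tauto
        have h2 : insert a T \ S = T \ S := by
          ext x; by_cases hxa : x = a <;> simp [hxa, haS, ha] <;> tauto
        rw [h1, h2]; exact ih
      · have hU : S ∪ insert a T = insert a (S ∪ T) := by
          ext x; by_cases hxa : x = a <;> simp [hxa, haS, ha] <;> tauto
        have haU : a ∉ S ∪ T := by simp [haS, ha]
        have hstep : f (insert a (S ∪ T)) - f (S ∪ T) ≤ f (insert a S) - f S :=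
          hsub S (S ∪ T) Finset.subset_union_left a haU
        have h2 : insert a T \ S = insert a (T \ S) := by
          ext x; by_cases hxa : x = a <;> simp [hxa, haS, ha] <;> tauto
        have haTS : a ∉ T \ S := by simp [ha]
        rw [hU, h2, Finset.sum_insert haTS]
        linarith
  constructor
  · calc f Sstar ≤ f (S ∪ Sstar) := hmono _ _ Finset.subset_union_right
      _ ≤ _ := key Sstar
  · have hsup0 : 0 ≤ Sᶜ.sup' hne (fun x => f (insert x S) - f S) := by
      obtain ⟨y, hy⟩ := hne
      calc (0:ℝ) ≤ f (insert y S) - f S := by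
            have := hmono S (insert y S) (Finset.subset_insert _ _); linarith
        _ ≤ _ := Finset.le_sup' (fun x => f (insert x S) - f S) hy
    have hbound : ∑ x ∈ Sstar \ S, (f (insert x S) - f S)
        ≤ (Sstar \ S).card * Sᶜ.sup' hne (fun x => f (insert x S) - f S) := by
      rw [← nsmul_eq_mul, ← Finset.sum_const]
      apply Finset.sum_le_sum
      intro x hx
      have hxc : x ∈ Sᶜ := by
        simp only [Finset.mem_compl]
        exact (Finset.mem_sdiff.mp hx).2
      exact Finset.le_sup' (fun x => f (insert x S) - f S) hxc
    have hcard2 : ((Sstar \ S).card : ℝ) ≤ (s : ℝ) := by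
      exact_mod_cast le_trans (Finset.card_le_card (Finset.sdiff_subset)) hcard
    have := mul_le_mul_of_nonneg_right hcard2 hsup0
    linarith
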